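/- A twice-differentiable curve t ↦ (G(t), I(t), E(t), P(t)) with P(t) ≠ 0 satisfies the geodesic equation ẍᵏ + Σᵢⱼ Γᵏᵢⱼ ẋⁱ ẋʲ = 0 of the metric g if and only if it satisfies the system: Ï + (1/P²) Ġ Ė − (I/P²) Ė² = 0; Ë − (1/P²) Ġ İ + (I/P²) Ė İ = 0; P̈ + (1/P³) Ġ² − (2I/P³) Ġ Ė + (I²/P³) Ė² = 0; G̈ − (I/P²) Ġ İ − (2/P) Ġ Ṗ − ((P²−I²)/P²) İ Ė + (2I/P) Ė Ṗ = 0. -/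

import Mathlib

/- Coordinates on ℝ⁴: index 0 = G (x¹), 1 = I (x²), 2 = E (x³), 3 = P (x⁴). -/

open scoped Matrix

/-- The components of the sub-Riemannian metric, as a matrix-valued function on
ℝ⁴: `g₁₁ = 1/P²`, `g₂₂ = 1`, `g₃₃ = 1 + I²/P²`, `g₄₄ = 1`,
`g₁₃ = g₃₁ = −I/P²`, and all other components zero. -/
noncomputable def gMetric (x : Fin 4 → ℝ) : Matrix (Fin 4) (Fin 4) ℝ :=
  !![1 / (x 3) ^ 2, 0, -(x 1) / (x 3) ^ 2, 0;
     0, 1, 0, 0;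
     -(x 1) / (x 3) ^ 2, 0, 1 + (x 1) ^ 2 / (x 3) ^ 2, 0;
     0, 0, 0, 1]

/-- Partial derivative `∂ᵢ f` of a real-valued function on ℝ⁴. -/
noncomputable def pd (f : (Fin 4 → ℝ) → ℝ) (i : Fin 4) (x : Fin 4 → ℝ) : ℝ :=
  fderiv ℝ f x (Pi.single i 1)

/-- Christoffel symbols of the second kind of the metric `gMetric`:
`Γᵏᵢⱼ = ½ Σₗ gᵏˡ (∂ᵢ g_{lj} + ∂ⱼ g_{li} − ∂ₗ g_{ij})`, where `gᵏˡ` are the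
entries of the inverse matrix of `g`. -/
noncomputable def Γ (k i j : Fin 4) (x : Fin 4 → ℝ) : ℝ :=
  (1 / 2) * ∑ l : Fin 4, (gMetric x)⁻¹ k l *
    (pd (fun y => gMetric y l j) i x + pd (fun y => gMetric y l i) j x
      - pd (fun y => gMetric y i j) l x)

/-- A twice-differentiable curve `t ↦ (G(t), I(t), E(t), P(t))` with
`P(t) ≠ 0` satisfies the geodesic equation
`ẍᵏ + Σᵢⱼ Γᵏᵢⱼ ẋⁱ ẋʲ = 0` of the metric `g` if and only if it satisfies
the displayed system of four equations (with `Ġ, İ, Ė, Ṗ` the derivatives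
of the coordinates `G = c · 0`, `I = c · 1`, `E = c · 2`, `P = c · 3`). -/
theorem pd_hasFDerivAt {f : (Fin 4 → ℝ) → ℝ} {L : (Fin 4 → ℝ) →L[ℝ] ℝ}
    {x : Fin 4 → ℝ} (h : HasFDerivAt f L x) (i : Fin 4) :
    pd f i x = L (Pi.single i 1) := by rw [pd, h.fderiv]

theorem hasF_invsq {x : Fin 4 → ℝ} (hx : x 3 ≠ 0) :
    HasFDerivAt (fun y : Fin 4 → ℝ => 1 / (y 3) ^ 2)
      ((-2 / (x 3) ^ 3) • (ContinuousLinearMap.proj 3 : (Fin 4 → ℝ) →L[ℝ] ℝ)) x := by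
  have h3 : HasFDerivAt (fun y : Fin 4 → ℝ => y 3)
      (ContinuousLinearMap.proj 3 : (Fin 4 → ℝ) →L[ℝ] ℝ) x := hasFDerivAt_apply 3 x
  have hout : HasDerivAt (fun u : ℝ => 1 / u ^ 2) (-2 / (x 3)^3) (x 3) := by
    have := ((hasDerivAt_id (x 3)).pow 2).inv (pow_ne_zero 2 hx)
    refine (this.congr_deriv ?_).congr_of_eventuallyEq (Filter.Eventually.of_forall fun u => ?_)
    · show -(((2:ℕ):ℝ) * (x 3) ^ 1 * 1) / ((x 3) ^ 2) ^ 2 = -2 / x 3 ^ 3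
      rw [div_eq_div_iff (pow_ne_zero 2 (pow_ne_zero 2 hx)) (pow_ne_zero 3 hx)]
      push_cast
      ring
    · show 1 / u ^ 2 = (u ^ 2)⁻¹
      exact one_div _
  have := hout.comp_hasFDerivAt x h3
  exact this

theorem hasF_g02 {x : Fin 4 → ℝ} (hx : x 3 ≠ 0) :
    HasFDerivAt (fun y : Fin 4 → ℝ => -(y 1) / (y 3) ^ 2)
      ((-1 / (x 3) ^ 2) • (ContinuousLinearMap.proj 1 : (Fin 4 → ℝ) →L[ℝ] ℝ)
        + (2 * x 1 / (x 3) ^ 3) • (ContinuousLinearMap.proj 3 : (Fin 4 → ℝ) →L[ℝ] ℝ)) x := by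
  have h1 : HasFDerivAt (fun y : Fin 4 → ℝ => y 1)
      (ContinuousLinearMap.proj 1 : (Fin 4 → ℝ) →L[ℝ] ℝ) x := hasFDerivAt_apply 1 x
  have hm := (h1.neg.mul (hasF_invsq hx))
  have heq : ∀ y : Fin 4 → ℝ, -(y 1) * (1 / (y 3) ^ 2) = -(y 1) / (y 3) ^ 2 := fun y => by ring
  refine (hm.congr_fderiv ?_).congr_of_eventuallyEq (by filter_upwards with y using (heq y).symm)
  ext j
  simp [ContinuousLinearMap.smul_apply]
  field_simp
  ring

theorem hasF_g22 {x : Fin 4 → ℝ} (hx : x 3 ≠ 0) :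
    HasFDerivAt (fun y : Fin 4 → ℝ => 1 + (y 1) ^ 2 / (y 3) ^ 2)
      ((2 * x 1 / (x 3) ^ 2) • (ContinuousLinearMap.proj 1 : (Fin 4 → ℝ) →L[ℝ] ℝ)
        + (-2 * (x 1) ^ 2 / (x 3) ^ 3) • (ContinuousLinearMap.proj 3 : (Fin 4 → ℝ) →L[ℝ] ℝ)) x := by
  have h1 : HasFDerivAt (fun y : Fin 4 → ℝ => y 1)
      (ContinuousLinearMap.proj 1 : (Fin 4 → ℝ) →L[ℝ] ℝ) x := hasFDerivAt_apply 1 x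
  have hm := ((h1.mul h1).mul (hasF_invsq hx)).const_add 1
  have heq : ∀ y : Fin 4 → ℝ, 1 + y 1 * y 1 * (1 / (y 3) ^ 2) = 1 + (y 1) ^ 2 / (y 3) ^ 2 :=
    fun y => by ring
  refine (hm.congr_fderiv ?_).congr_of_eventuallyEq (by filter_upwards with y using (heq y).symm)
  ext j
  simp [ContinuousLinearMap.smul_apply]
  field_simp
  ring

theorem pd_const (c : ℝ) (i : Fin 4) (x : Fin 4 → ℝ) : pd (fun _ => c) i x = 0 := by
  simp [pd]

theorem pd_g00 {x : Fin 4 → ℝ} (hx : x 3 ≠ 0) (i : Fin 4) :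
    pd (fun y => 1 / (y 3) ^ 2) i x = if i = 3 then -2 / (x 3) ^ 3 else 0 := by
  rw [pd_hasFDerivAt (hasF_invsq hx)]
  fin_cases i <;>
    simp [Pi.single_apply]

theorem pd_g02 {x : Fin 4 → ℝ} (hx : x 3 ≠ 0) (i : Fin 4) :
    pd (fun y => -(y 1) / (y 3) ^ 2) i x =
      if i = 1 then -1 / (x 3) ^ 2 else if i = 3 then 2 * x 1 / (x 3) ^ 3 else 0 := by
  rw [pd_hasFDerivAt (hasF_g02 hx)]
  fin_cases i <;>
    simp [Pi.single_apply]

theorem pd_g22 {x : Fin 4 → ℝ} (hx : x 3 ≠ 0) (i : Fin 4) :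
    pd (fun y => 1 + (y 1) ^ 2 / (y 3) ^ 2) i x =
      if i = 1 then 2 * x 1 / (x 3) ^ 2 else if i = 3 then -2 * (x 1) ^ 2 / (x 3) ^ 3 else 0 := by
  rw [pd_hasFDerivAt (hasF_g22 hx)]
  fin_cases i <;>
    simp [Pi.single_apply]

theorem gMetric_inv {x : Fin 4 → ℝ} (hx : x 3 ≠ 0) :
    (gMetric x)⁻¹ =
      !![(x 3) ^ 2 + (x 1) ^ 2, 0, x 1, 0;
         0, 1, 0, 0;
         x 1, 0, 1, 0;
         0, 0, 0, 1] := by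
  apply Matrix.inv_eq_right_inv
  ext i j
  fin_cases i <;> fin_cases j <;>
    · simp [gMetric, Matrix.mul_apply, Fin.sum_univ_four, Matrix.vecHead, Matrix.vecTail]
      try field_simp
      try ring

theorem geo_sum1 {x : Fin 4 → ℝ} (hx : x 3 ≠ 0) (v : Fin 4 → ℝ) :
    ∑ i : Fin 4, ∑ j : Fin 4, Γ 1 i j x * v i * v j
      = (1 / (x 3) ^ 2) * v 0 * v 2 - (x 1 / (x 3) ^ 2) * v 2 * v 2 := by
  simp only [Γ, gMetric_inv hx]
  simp only [Fin.sum_univ_four, gMetric, Matrix.cons_val_zero,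
    Matrix.cons_val_one, Matrix.head_cons, Matrix.cons_val_two, Matrix.tail_cons,
    Matrix.cons_val_three, Matrix.head_fin_const, Matrix.of_apply, Matrix.cons_val',
    Matrix.empty_val', Matrix.cons_val_fin_one]
  simp only [pd_g00 hx, pd_g02 hx, pd_g22 hx, pd_const]
  simp only [Fin.reduceEq, if_true, if_false, reduceIte]
  field_simp
  ring

theorem geo_sum0 {x : Fin 4 → ℝ} (hx : x 3 ≠ 0) (v : Fin 4 → ℝ) :
    ∑ i : Fin 4, ∑ j : Fin 4, Γ 0 i j x * v i * v j
      = -(x 1 / (x 3) ^ 2) * v 0 * v 1 - (2 / x 3) * v 0 * v 3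
        - (((x 3) ^ 2 - (x 1) ^ 2) / (x 3) ^ 2) * v 1 * v 2 + (2 * x 1 / x 3) * v 2 * v 3 := by
  simp only [Γ, gMetric_inv hx]
  simp only [Fin.sum_univ_four, gMetric, Matrix.cons_val_zero,
    Matrix.cons_val_one, Matrix.head_cons, Matrix.cons_val_two, Matrix.tail_cons,
    Matrix.cons_val_three, Matrix.head_fin_const, Matrix.of_apply, Matrix.cons_val',
    Matrix.empty_val', Matrix.cons_val_fin_one]
  simp only [pd_g00 hx, pd_g02 hx, pd_g22 hx, pd_const]
  simp only [Fin.reduceEq, if_true, if_false, reduceIte]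
  field_simp
  ring

theorem geo_sum2 {x : Fin 4 → ℝ} (hx : x 3 ≠ 0) (v : Fin 4 → ℝ) :
    ∑ i : Fin 4, ∑ j : Fin 4, Γ 2 i j x * v i * v j
      = -(1 / (x 3) ^ 2) * v 0 * v 1 + (x 1 / (x 3) ^ 2) * v 1 * v 2 := by
  simp only [Γ, gMetric_inv hx]
  simp only [Fin.sum_univ_four, gMetric, Matrix.cons_val_zero,
    Matrix.cons_val_one, Matrix.head_cons, Matrix.cons_val_two, Matrix.tail_cons,
    Matrix.cons_val_three, Matrix.head_fin_const, Matrix.of_apply, Matrix.cons_val',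
    Matrix.empty_val', Matrix.cons_val_fin_one]
  simp only [pd_g00 hx, pd_g02 hx, pd_g22 hx, pd_const]
  simp only [Fin.reduceEq, if_true, if_false, reduceIte]
  field_simp
  ring

theorem geo_sum3 {x : Fin 4 → ℝ} (hx : x 3 ≠ 0) (v : Fin 4 → ℝ) :
    ∑ i : Fin 4, ∑ j : Fin 4, Γ 3 i j x * v i * v j
      = (1 / (x 3) ^ 3) * v 0 * v 0 - (2 * x 1 / (x 3) ^ 3) * v 0 * v 2
        + ((x 1) ^ 2 / (x 3) ^ 3) * v 2 * v 2 := by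
  simp only [Γ, gMetric_inv hx]
  simp only [Fin.sum_univ_four, gMetric, Matrix.cons_val_zero,
    Matrix.cons_val_one, Matrix.head_cons, Matrix.cons_val_two, Matrix.tail_cons,
    Matrix.cons_val_three, Matrix.head_fin_const, Matrix.of_apply, Matrix.cons_val',
    Matrix.empty_val', Matrix.cons_val_fin_one]
  simp only [pd_g00 hx, pd_g02 hx, pd_g22 hx, pd_const]
  simp only [Fin.reduceEq, if_true, if_false, reduceIte]
  field_simp
  ring

theorem geodesic_equations (c : ℝ → (Fin 4 → ℝ))
    (hc : ∀ k : Fin 4, Differentiable ℝ (fun t => c t k))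
    (hc' : ∀ k : Fin 4, Differentiable ℝ (deriv (fun t => c t k)))
    (hP : ∀ t : ℝ, c t 3 ≠ 0) :
    (∀ t : ℝ, ∀ k : Fin 4,
        deriv (deriv (fun s => c s k)) t
          + ∑ i : Fin 4, ∑ j : Fin 4,
              Γ k i j (c t) * deriv (fun s => c s i) t * deriv (fun s => c s j) t
          = 0) ↔
    (∀ t : ℝ,
      let G := c t 0; let I := c t 1; let P := c t 3
      let G' := deriv (fun s => c s 0) t
      let I' := deriv (fun s => c s 1) t
      let E' := deriv (fun s => c s 2) t
      let P' := deriv (fun s => c s 3) t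
      let G'' := deriv (deriv (fun s => c s 0)) t
      let I'' := deriv (deriv (fun s => c s 1)) t
      let E'' := deriv (deriv (fun s => c s 2)) t
      let P'' := deriv (deriv (fun s => c s 3)) t
      I'' + (1 / P ^ 2) * G' * E' - (I / P ^ 2) * E' * E' = 0 ∧
      E'' - (1 / P ^ 2) * G' * I' + (I / P ^ 2) * E' * I' = 0 ∧
      P'' + (1 / P ^ 3) * G' * G' - (2 * I / P ^ 3) * G' * E'
        + (I ^ 2 / P ^ 3) * E' * E' = 0 ∧
      G'' - (I / P ^ 2) * G' * I' - (2 / P) * G' * P'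
        - ((P ^ 2 - I ^ 2) / P ^ 2) * I' * E' + (2 * I / P) * E' * P' = 0) := by
  constructor
  · intro h t
    have h0 := h t 0; have h1 := h t 1; have h2 := h t 2; have h3 := h t 3
    rw [geo_sum0 (hP t)] at h0
    rw [geo_sum1 (hP t)] at h1
    rw [geo_sum2 (hP t)] at h2
    rw [geo_sum3 (hP t)] at h3
    refine ⟨by linear_combination h1, by linear_combination h2,
      by linear_combination h3, by linear_combination h0⟩
  · intro h t k
    obtain ⟨e1, e2, e3, e4⟩ := h t
    have key0 : deriv (deriv fun s => c s 0) t + ∑ i : Fin 4, ∑ j : Fin 4,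
        Γ 0 i j (c t) * deriv (fun s => c s i) t * deriv (fun s => c s j) t = 0 := by
      rw [geo_sum0 (hP t)]; linear_combination e4
    have key1 : deriv (deriv fun s => c s 1) t + ∑ i : Fin 4, ∑ j : Fin 4,
        Γ 1 i j (c t) * deriv (fun s => c s i) t * deriv (fun s => c s j) t = 0 := by
      rw [geo_sum1 (hP t)]; linear_combination e1
    have key2 : deriv (deriv fun s => c s 2) t + ∑ i : Fin 4, ∑ j : Fin 4,
        Γ 2 i j (c t) * deriv (fun s => c s i) t * deriv (fun s => c s j) t = 0 := by
      rw [geo_sum2 (hP t)]; linear_combination e2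
    have key3 : deriv (deriv fun s => c s 3) t + ∑ i : Fin 4, ∑ j : Fin 4,
        Γ 3 i j (c t) * deriv (fun s => c s i) t * deriv (fun s => c s j) t = 0 := by
      rw [geo_sum3 (hP t)]; linear_combination e3
    fin_cases k
    · exact key0
    · exact key1
    · exact key2
    · exact key3
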